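/- Let K ∈ ℕ, K ≥ 1, and let h : [0,1]^K → ℝ be square-integrable. Define h_∅ = ∫_{[0,1]^K} h(x) dx and, for k ∈ {1,…,K}, h_k(t) = ∫_{[0,1]^{K−1}} h(x₁,…,x_{k−1}, t, x_{k+1},…,x_K) dx_{−k} − h_∅. Then h is of order one, i.e., h(x) = h_∅ + Σ_{k=1}^K h_k(x_k) for almost every x ∈ [0,1]^K, if and only if Σ_{k=1}^K σ_k²(h) = σ²(h). -/

import Mathlib

open MeasureTheory Matrix Finset

/-- The unit cube `[0,1]^K`. -/
def box (K : ℕ) : Set (Fin K → ℝ) := Set.univ.pi fun _ => Set.Icc (0 : ℝ) 1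

/-- The marginal of `h` in the `k`-th variable:
`t ↦ ∫_{[0,1]^{K-1}} h(x₁,…,x_{k-1}, t, x_{k+1},…,x_K) dx_{−k}`. -/
noncomputable def marg (K : ℕ) (h : (Fin K → ℝ) → ℝ) (k : Fin K) (t : ℝ) : ℝ :=
  ∫ x in box K, h (Function.update x k t)

/-- Total variance `σ²(h) = ∫_{[0,1]^K} h(x)² dx − (∫_{[0,1]^K} h(x) dx)²`. -/
noncomputable def totalVar (K : ℕ) (h : (Fin K → ℝ) → ℝ) : ℝ :=
  (∫ x in box K, (h x) ^ 2) - (∫ x in box K, h x) ^ 2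

/-- First-order ANOVA variance
`σ_k²(h) = ∫₀¹ (marginal of h at t − ∫ h)² dt`. -/
noncomputable def firstVar (K : ℕ) (h : (Fin K → ℝ) → ℝ) (k : Fin K) : ℝ :=
  ∫ t in Set.Icc (0 : ℝ) 1, (marg K h k t - ∫ x in box K, h x) ^ 2

namespace OrderOneAux

noncomputable def ν : Measure ℝ := volume.restrict (Set.Icc 0 1)

instance : IsProbabilityMeasure ν := ⟨by simp [ν, Real.volume_Icc]⟩

noncomputable def μb (K : ℕ) : Measure (Fin K → ℝ) := Measure.pi fun _ => ν

instance (K : ℕ) : IsProbabilityMeasure (μb K) := by unfold μb; infer_instance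

lemma restrict_box (K : ℕ) : volume.restrict (box K) = μb K := by
  refine ((Measure.pi_eq fun s hs => ?_)).symm
  rw [Measure.restrict_apply (MeasurableSet.univ_pi hs)]
  rw [show ((Set.univ.pi s) ∩ box K)
      = Set.univ.pi fun i => s i ∩ Set.Icc (0:ℝ) 1 from (Set.pi_inter_distrib).symm]
  rw [MeasureTheory.volume_pi, Measure.pi_pi]
  simp [ν, Measure.restrict_apply (hs _)]

variable {K : ℕ}

lemma measurable_Phi (k : Fin K) :
    Measurable (fun p : ℝ × (Fin K → ℝ) => Function.update p.2 k p.1) := by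
  have : (fun p : ℝ × (Fin K → ℝ) => Function.update p.2 k p.1)
      = (fun q : (Fin K → ℝ) × ℝ => Function.update q.1 k q.2) ∘ Prod.swap := rfl
  rw [this]
  exact measurable_update'.comp measurable_swap

lemma preimage_Phi (k : Fin K) (s : Fin K → Set ℝ) :
    (fun p : ℝ × (Fin K → ℝ) => Function.update p.2 k p.1) ⁻¹' (Set.univ.pi s)
      = (s k) ×ˢ (Set.univ.pi (Function.update s k Set.univ)) := by
  ext ⟨t, y⟩
  simp only [Set.mem_preimage, Set.mem_pi, Set.mem_univ, true_implies, Set.mem_prod]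
  constructor
  · intro H
    refine ⟨by simpa using H k, fun i => ?_⟩
    rcases eq_or_ne i k with rfl | hik
    · simp
    · simpa [Function.update_of_ne hik] using H i
  · rintro ⟨h1, h2⟩ i
    rcases eq_or_ne i k with rfl | hik
    · simpa using h1
    · have := h2 i
      simpa [Function.update_of_ne hik] using this

lemma measurePreserving_Phi (k : Fin K) :
    MeasurePreserving (fun p : ℝ × (Fin K → ℝ) => Function.update p.2 k p.1)
      (ν.prod (μb K)) (μb K) := by
  refine ⟨measurable_Phi k, ?_⟩
  refine ((Measure.pi_eq fun s hs => ?_)).symm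
  rw [Measure.map_apply (measurable_Phi k) (MeasurableSet.univ_pi hs), preimage_Phi,
    Measure.prod_prod]
  unfold μb
  rw [Measure.pi_pi]
  have h1 : (fun i => ν (Function.update s k Set.univ i))
      = Function.update (fun i => ν (s i)) k 1 := by
    ext i
    rcases eq_or_ne i k with rfl | hik
    · simp
    · simp [Function.update_of_ne hik]
  rw [h1, Finset.prod_update_of_mem (Finset.mem_univ k), one_mul,
    Finset.sdiff_singleton_eq_erase]
  exact Finset.mul_prod_erase Finset.univ (fun i => ν (s i)) (Finset.mem_univ k)

lemma measurePreserving_eval (k : Fin K) :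
    MeasurePreserving (fun x : Fin K → ℝ => x k) (μb K) ν := by
  refine ⟨measurable_pi_apply k, ?_⟩
  rw [← (measurePreserving_Phi k).map_eq,
    Measure.map_map (measurable_pi_apply k) (measurable_Phi k)]
  have : ((fun x : Fin K → ℝ => x k) ∘ fun p : ℝ × (Fin K → ℝ) => Function.update p.2 k p.1)
      = Prod.fst := by
    funext p
    simp [Function.comp]
  rw [this, Measure.map_fst_prod]
  simp

lemma integrable_comp_Phi {k : Fin K} {f : (Fin K → ℝ) → ℝ} (hf : Integrable f (μb K)) :
    Integrable (fun p : ℝ × (Fin K → ℝ) => f (Function.update p.2 k p.1)) (ν.prod (μb K)) :=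
  ((measurePreserving_Phi k).integrable_comp hf.aestronglyMeasurable).mpr hf

lemma fubini_update (k : Fin K) {f : (Fin K → ℝ) → ℝ} (hf : Integrable f (μb K)) :
    ∫ x, f x ∂(μb K) = ∫ t, ∫ y, f (Function.update y k t) ∂(μb K) ∂ν := by
  conv_lhs => rw [← (measurePreserving_Phi k).map_eq]
  rw [integral_map (measurable_Phi k).aemeasurable
    (by rw [(measurePreserving_Phi k).map_eq]; exact hf.aestronglyMeasurable)]
  exact integral_prod _ (integrable_comp_Phi hf)

variable {f : (Fin K → ℝ) → ℝ}

lemma integrable_m (hf2 : MemLp f 2 (μb K)) (k : Fin K) :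
    Integrable (fun t => ∫ y, f (Function.update y k t) ∂(μb K)) ν :=
  (integrable_comp_Phi (hf2.integrable one_le_two)).integral_prod_left

lemma int_m (hf2 : MemLp f 2 (μb K)) (k : Fin K) :
    ∫ t, (∫ y, f (Function.update y k t) ∂(μb K)) ∂ν = ∫ x, f x ∂(μb K) :=
  (fubini_update k (hf2.integrable one_le_two)).symm

lemma memℒp_m (hf2 : MemLp f 2 (μb K)) (k : Fin K) :
    MemLp (fun t => ∫ y, f (Function.update y k t) ∂(μb K)) 2 ν := by
  have hf1 : Integrable f (μb K) := hf2.integrable one_le_two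
  have hfsq : Integrable (fun x => f x ^ 2) (μb K) := hf2.integrable_sq
  have hm : Integrable (fun t => ∫ y, f (Function.update y k t) ∂(μb K)) ν :=
    integrable_m hf2 k
  have hG : Integrable (fun t => ∫ y, f (Function.update y k t) ^ 2 ∂(μb K)) ν :=
    (integrable_comp_Phi hfsq).integral_prod_left
  refine (memLp_two_iff_integrable_sq hm.aestronglyMeasurable).mpr ?_
  have hmsq : AEStronglyMeasurable
      (fun t => (∫ y, f (Function.update y k t) ∂(μb K)) ^ 2) ν := by
    exact hm.aestronglyMeasurable.pow 2
  refine hG.mono' hmsq ?_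
  have hs2 : ∀ᵐ t ∂ν, Integrable (fun y => f (Function.update y k t) ^ 2) (μb K) :=
    (integrable_comp_Phi hfsq).prod_right_ae
  have hs1 : ∀ᵐ t ∂ν, Integrable (fun y => f (Function.update y k t)) (μb K) :=
    (integrable_comp_Phi hf1).prod_right_ae
  filter_upwards [hs1, hs2] with t h1 h2
  have hmem : MemLp (fun y => f (Function.update y k t)) 2 (μb K) :=
    (memLp_two_iff_integrable_sq h1.aestronglyMeasurable).mpr h2
  have hvar := ProbabilityTheory.variance_nonneg (fun y => f (Function.update y k t)) (μb K)
  rw [ProbabilityTheory.variance_eq_sub hmem] at hvar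
  have : (∫ y, f (Function.update y k t) ∂(μb K)) ^ 2
      ≤ ∫ y, f (Function.update y k t) ^ 2 ∂(μb K) := by
    have h := sub_nonneg.mp hvar
    simpa [pow_two] using h
  rw [Real.norm_eq_abs, abs_of_nonneg (sq_nonneg _)]
  exact this

lemma integral_comp_eval {g : ℝ → ℝ} (hg : AEStronglyMeasurable g ν) (k : Fin K) :
    ∫ x, g (x k) ∂(μb K) = ∫ t, g t ∂ν := by
  rw [← (measurePreserving_eval (K := K) k).map_eq]
  exact (integral_map (measurable_pi_apply k).aemeasurable
    (by rw [(measurePreserving_eval (K := K) k).map_eq]; exact hg)).symm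

lemma memℒp_comp_eval {g : ℝ → ℝ} (hg : MemLp g 2 ν) (k : Fin K) :
    MemLp (fun x : Fin K → ℝ => g (x k)) 2 (μb K) :=
  hg.comp_measurePreserving (measurePreserving_eval k)

lemma integrable_mul_L2 {α : Type*} [MeasurableSpace α] {μ : Measure α} {u v : α → ℝ}
    (hu : MemLp u 2 μ) (hv : MemLp v 2 μ) : Integrable (fun x => u x * v x) μ := by
  have := hu.smul (φ := v) hv (p := 2) (q := 2) (r := 1)
  rw [memLp_one_iff_integrable] at this
  convert this using 1
  funext x
  simp [mul_comm]

end OrderOneAux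

open OrderOneAux in
/-- A square-integrable `h` is of order one, i.e. almost everywhere equal to
`h_∅ + Σ_k h_k(x_k)` with `h_∅ = ∫ h` and `h_k(t) = (marginal of h at t) − h_∅`,
if and only if the first-order ANOVA variances sum up to the total variance. -/
theorem order_one_iff_sum_firstVar_eq_totalVar (K : ℕ) (hK : 1 ≤ K)
    (h : (Fin K → ℝ) → ℝ)
    (hh : MemLp h 2 (volume.restrict (box K)))
    (h0 : ℝ) (hh0 : h0 = ∫ x in box K, h x)
    (hk : Fin K → ℝ → ℝ)
    (hhk : ∀ (k : Fin K) (t : ℝ), hk k t = marg K h k t - h0) :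
    (∀ᵐ x ∂(volume.restrict (box K)), h x = h0 + ∑ k, hk k (x k)) ↔
      ∑ k : Fin K, firstVar K h k = totalVar K h := by
  classical
  have hμ : volume.restrict (box K) = μb K := restrict_box K
  have hν : volume.restrict (Set.Icc (0:ℝ) 1) = ν := rfl
  have hh' : MemLp h 2 (μb K) := hμ ▸ hh
  have hInt : Integrable h (μb K) := hh'.integrable one_le_two
  have hsq : Integrable (fun x => h x ^ 2) (μb K) := hh'.integrable_sq
  have hI0 : h0 = ∫ x, h x ∂(μb K) := by rw [hh0, ← hμ]
  have hmarg : ∀ k t, marg K h k t = ∫ y, h (Function.update y k t) ∂(μb K) := by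
    intro k t; unfold marg; rw [hμ]
  have hkdef : ∀ k, hk k = fun t => (∫ y, h (Function.update y k t) ∂(μb K)) - h0 :=
    fun k => funext fun t => by rw [hhk k t, hmarg k t]
  -- facts about hk in L²(ν)
  have hmem_hk : ∀ k, MemLp (hk k) 2 ν := by
    intro k
    rw [hkdef k]
    have := (memℒp_m hh' k).sub (memLp_const (μ := ν) (p := 2) h0)
    simpa [Pi.sub_def] using this
  have hint_hk : ∀ k, Integrable (hk k) ν := fun k => (hmem_hk k).integrable one_le_two
  have hint_hk0 : ∀ k, ∫ t, hk k t ∂ν = 0 := by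
    intro k
    rw [hkdef k, integral_sub (integrable_m hh' k) (integrable_const h0),
      int_m hh' k, integral_const]
    simp [← hI0]
  -- facts about e k := fun x => hk k (x k) in L²(μb K)
  have hmem_e : ∀ k, MemLp (fun x : Fin K → ℝ => hk k (x k)) 2 (μb K) :=
    fun k => memℒp_comp_eval (hmem_hk k) k
  have hint_e : ∀ k, Integrable (fun x : Fin K → ℝ => hk k (x k)) (μb K) :=
    fun k => (hmem_e k).integrable one_le_two
  have hint_e0 : ∀ k, ∫ x, hk k (x k) ∂(μb K) = 0 := by
    intro k
    rw [integral_comp_eval (hmem_hk k).aestronglyMeasurable k, hint_hk0 k]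
  set σ : Fin K → ℝ := fun k => ∫ t, hk k t ^ 2 ∂ν with hσ
  have hfirstVar : ∀ k, firstVar K h k = σ k := by
    intro k
    unfold firstVar
    simp_rw [← hh0, ← hhk]
    rfl
  have hint_esq : ∀ k, ∫ x, hk k (x k) ^ 2 ∂(μb K) = σ k := by
    intro k
    exact integral_comp_eval (hmem_hk k).integrable_sq.aestronglyMeasurable k
  -- inner product of h with e k
  have hint_he : ∀ k, ∫ x, h x * hk k (x k) ∂(μb K) = σ k := by
    intro k
    have hprod : Integrable (fun x => h x * hk k (x k)) (μb K) :=
      integrable_mul_L2 hh' (hmem_e k)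
    rw [fubini_update k hprod]
    have h1 : ∀ t, (∫ y, h (Function.update y k t) * hk k (Function.update y k t k) ∂(μb K))
        = hk k t ^ 2 + h0 * hk k t := by
      intro t
      simp only [Function.update_self]
      rw [integral_mul_const]
      have : (∫ y, h (Function.update y k t) ∂(μb K)) = hk k t + h0 := by
        rw [hkdef k]; ring
      rw [this]; ring
    simp_rw [h1]
    rw [integral_add (hmem_hk k).integrable_sq ((hint_hk k).const_mul h0),
      integral_const_mul, hint_hk0 k]
    simp [hσ]
  -- orthogonality of e j and e k for j ≠ k
  have hint_ee : ∀ j k : Fin K, j ≠ k → ∫ x, hk j (x j) * hk k (x k) ∂(μb K) = 0 := by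
    intro j k hjk
    have hprod : Integrable (fun x => hk j (x j) * hk k (x k)) (μb K) :=
      integrable_mul_L2 (hmem_e j) (hmem_e k)
    rw [fubini_update k hprod]
    have h1 : ∀ t, (∫ y, hk j (Function.update y k t j) * hk k (Function.update y k t k) ∂(μb K))
        = 0 := by
      intro t
      simp only [Function.update_self, Function.update_of_ne hjk]
      rw [integral_mul_const, hint_e0 j, zero_mul]
    simp_rw [h1]
    simp
  -- the sum function s
  set s : (Fin K → ℝ) → ℝ := fun x => ∑ k, hk k (x k) with hsdef
  have hmem_s : MemLp s 2 (μb K) := by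
    have := memLp_finset_sum' (μ := μb K) (p := 2) Finset.univ
      (f := fun k (x : Fin K → ℝ) => hk k (x k)) (fun k _ => hmem_e k)
    have he : (∑ k : Fin K, fun x : Fin K → ℝ => hk k (x k)) = s := by
      funext x; simp [hsdef]
    rwa [he] at this
  have hint_s : Integrable s (μb K) := hmem_s.integrable one_le_two
  have hint_s0 : ∫ x, s x ∂(μb K) = 0 := by
    rw [hsdef]
    rw [integral_finset_sum _ fun k _ => hint_e k]
    simp [hint_e0]
  have hint_hs : ∫ x, h x * s x ∂(μb K) = ∑ k, σ k := by
    have : ∀ x, h x * s x = ∑ k, h x * hk k (x k) := by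
      intro x; rw [hsdef]; exact Finset.mul_sum _ _ _
    simp_rw [this]
    rw [integral_finset_sum _ fun k _ => integrable_mul_L2 hh' (hmem_e k)]
    exact Finset.sum_congr rfl fun k _ => hint_he k
  have hint_ss : ∫ x, s x ^ 2 ∂(μb K) = ∑ k, σ k := by
    have h1 : ∀ x, s x ^ 2 = ∑ j, ∑ k, hk j (x j) * hk k (x k) := by
      intro x
      rw [hsdef, pow_two]
      exact Finset.sum_mul_sum _ _ _ _
    simp_rw [h1]
    rw [integral_finset_sum _ fun j _ =>
      integrable_finset_sum _ fun k _ => integrable_mul_L2 (hmem_e j) (hmem_e k)]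
    refine Finset.sum_congr rfl fun j _ => ?_
    rw [integral_finset_sum _ fun k _ => integrable_mul_L2 (hmem_e j) (hmem_e k)]
    rw [Finset.sum_eq_single_of_mem j (Finset.mem_univ j)
      (fun k _ hkj => hint_ee j k (Ne.symm hkj))]
    rw [← hint_esq j]
    congr 1
    funext x
    ring
  -- the key identity
  have hF2int : Integrable (fun x => (h x - (h0 + s x)) ^ 2) (μb K) := by
    have : MemLp (fun x => h x - (h0 + s x)) 2 (μb K) := by
      have := hh'.sub ((memLp_const (μ := μb K) (p := 2) h0).add hmem_s)
      simpa [Pi.sub_def, Pi.add_def] using this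
    exact this.integrable_sq
  have key : ∫ x, (h x - (h0 + s x)) ^ 2 ∂(μb K)
      = ((∫ x, h x ^ 2 ∂(μb K)) - h0 ^ 2) - ∑ k, σ k := by
    have hexp : ∀ x, (h x - (h0 + s x)) ^ 2
        = (h x ^ 2 + (h0 ^ 2 + (s x ^ 2 + 2 * h0 * s x)))
          - (2 * h0 * h x + 2 * (h x * s x)) := by
      intro x; ring
    simp_rw [hexp]
    have i_s2 : Integrable (fun x => s x ^ 2) (μb K) := hmem_s.integrable_sq
    have i_hs : Integrable (fun x => h x * s x) (μb K) := integrable_mul_L2 hh' hmem_s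
    have iE : Integrable (fun x => 2 * h0 * s x) (μb K) := hint_s.const_mul _
    have iD : Integrable (fun x => s x ^ 2 + 2 * h0 * s x) (μb K) := i_s2.add iE
    have iC : Integrable (fun x => h0 ^ 2 + (s x ^ 2 + 2 * h0 * s x)) (μb K) :=
      (integrable_const _).add iD
    have iA : Integrable (fun x => h x ^ 2 + (h0 ^ 2 + (s x ^ 2 + 2 * h0 * s x))) (μb K) :=
      hsq.add iC
    have iF : Integrable (fun x => 2 * h0 * h x) (μb K) := hInt.const_mul _
    have iG : Integrable (fun x => 2 * (h x * s x)) (μb K) := i_hs.const_mul 2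
    have iB : Integrable (fun x => 2 * h0 * h x + 2 * (h x * s x)) (μb K) := iF.add iG
    rw [integral_sub iA iB, integral_add hsq iC, integral_add (integrable_const _) iD,
      integral_add i_s2 iE, integral_add iF iG,
      integral_const_mul, integral_const_mul, integral_const_mul,
      hint_s0, hint_ss, hint_hs, integral_const, ← hI0]
    simp only [measure_univ, probReal_univ, ENNReal.toReal_one, smul_eq_mul, one_mul]
    ring
  -- put everything together
  have htot : totalVar K h = (∫ x, h x ^ 2 ∂(μb K)) - h0 ^ 2 := by
    unfold totalVar
    rw [hμ, ← hI0]
  rw [hμ]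
  have hiff1 : (∀ᵐ x ∂(μb K), h x = h0 + ∑ k, hk k (x k))
      ↔ (∫ x, (h x - (h0 + s x)) ^ 2 ∂(μb K)) = 0 := by
    rw [integral_eq_zero_iff_of_nonneg (fun x => sq_nonneg _) hF2int]
    constructor
    · intro H
      filter_upwards [H] with x hx
      simp only [Pi.zero_apply]
      rw [hsdef]
      simp [hx]
    · intro H
      filter_upwards [H] with x hx
      have h2 : h x - (h0 + s x) = 0 := by
        have := pow_eq_zero_iff (n := 2) (by norm_num) |>.mp hx
        exact this
      have h3 : h x = h0 + s x := by linarith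
      rw [h3, hsdef]
  rw [hiff1, key, htot]
  simp_rw [hfirstVar]
  constructor
  · intro H; linarith
  · intro H; linarith
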